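/- Let f : ℝ → ℝ be continuously differentiable and 2π-periodic, let M ≥ 0 satisfy |f′(x)| ≤ M for all x, and let x_0 ∈ ℝ satisfy f(x_0) = 0. Let N ≥ 2, Γ ∈ ℝ, D : Fin (N−1) → ℝ, and let φ^C : Fin (N−1) → ℝ satisfy f(φ^C_k) = Γ·D_k for all k. Let S = ∑_{j=1}^{N−1} φ^C_j, let Ψ = S − 2π·⌊S/(2π)⌋ (so Ψ ∈ [0, 2π) and Ψ ≡ S mod 2π), and define φ^R_k = φ^C_k − (x_0 + Ψ)/(N−1). Then f(−∑_{j=1}^{N−1} φ^R_j) = 0, and for every k, |f(φ^R_k) − f(−∑_{j=1}^{N−1} φ^R_j) − Γ·D_k| ≤ M·|x_0 + Ψ|/(N−1). In particular, a chain locked state yields an approximate ring locked state whose residual is O(1/N). -/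

import Mathlib

/-- From a chain locked state with telescopic coupling, the shifted phases
`φ^R_k = φ^C_k - (x_0 + Ψ)/(N-1)` give an approximate ring locked state: the ring boundary
term vanishes, `f(-∑_j φ^R_j) = 0`, and each residual
`|f(φ^R_k) - f(-∑_j φ^R_j) - Γ·D_k|` is at most `M·|x_0 + Ψ|/(N-1)`, i.e. `O(1/N)`. -/
theorem chain_gives_approximate_ring_telescopic (f : ℝ → ℝ) (hf : ContDiff ℝ 1 f)
    (hper : Function.Periodic f (2 * Real.pi))
    (M : ℝ) (hM : 0 ≤ M) (hM' : ∀ x, |deriv f x| ≤ M)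
    (x0 : ℝ) (hx0 : f x0 = 0)
    (N : ℕ) (hN : 2 ≤ N) (Γ : ℝ) (D : Fin (N - 1) → ℝ)
    (φC : Fin (N - 1) → ℝ) (hφC : ∀ k, f (φC k) = Γ * D k)
    (S Ψ : ℝ) (hS : S = ∑ j, φC j)
    (hΨ : Ψ = S - 2 * Real.pi * (⌊S / (2 * Real.pi)⌋ : ℤ))
    (φR : Fin (N - 1) → ℝ) (hφR : ∀ k, φR k = φC k - (x0 + Ψ) / ((N : ℝ) - 1)) :
    f (-∑ j, φR j) = 0 ∧
    ∀ k, |f (φR k) - f (-∑ j, φR j) - Γ * D k| ≤ M * |x0 + Ψ| / ((N : ℝ) - 1) := by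
  have hcard : ((N - 1 : ℕ) : ℝ) = (N : ℝ) - 1 := by
    have : (1 : ℕ) ≤ N := by omega
    push_cast [Nat.cast_sub this]; ring
  have hNpos : (0 : ℝ) < (N : ℝ) - 1 := by
    have : (2 : ℝ) ≤ (N : ℝ) := by exact_mod_cast hN
    linarith
  have hsum : ∑ j, φR j = S - (x0 + Ψ) := by
    simp only [hφR, Finset.sum_sub_distrib, Finset.sum_const, Finset.card_univ,
      Fintype.card_fin, ← hS, nsmul_eq_mul, hcard]
    field_simp
  have hzero : f (-∑ j, φR j) = 0 := by
    have : -∑ j, φR j = x0 + (-⌊S / (2 * Real.pi)⌋ : ℤ) * (2 * Real.pi) := by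
      rw [hsum, hΨ]; push_cast; ring
    rw [this, hper.int_mul, hx0]
  refine ⟨hzero, fun k => ?_⟩
  rw [hzero, ← hφC k]
  have hlip : ∀ x y : ℝ, |f x - f y| ≤ M * |x - y| := by
    intro x y
    have := Convex.norm_image_sub_le_of_norm_deriv_le (f := f)
      (fun z _ => (hf.differentiable one_ne_zero).differentiableAt)
      (fun z _ => hM' z) convex_univ (Set.mem_univ y) (Set.mem_univ x)
    simpa [Real.norm_eq_abs] using this
  have := hlip (φR k) (φC k)
  
  calc |f (φR k) - 0 - f (φC k)| = |f (φR k) - f (φC k)| := by ring_nf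
    _ ≤ M * |φC k - (x0 + Ψ) / ((N : ℝ) - 1) - φC k| := by rw [← hφR k]; exact this
    _ = M * |x0 + Ψ| / ((N : ℝ) - 1) := by
        rw [show φC k - (x0 + Ψ) / ((N : ℝ) - 1) - φC k = -((x0 + Ψ) / ((N : ℝ) - 1)) by ring,
          abs_neg, abs_div, abs_of_pos hNpos]; ring
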